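/- In a two-player quadratic game with costs f_i(x_i, x_{-i}) = (1/2)[x_i; x_{-i}]ᵀ[[A_i, B_iᵀ],[B_i, D_i]][x_i; x_{-i}] + [a_i; b_i]ᵀ[x_i; x_{-i}] where A_i, D_i symmetric, suppose the affine conjectures c_{-i}(x_i) = L_i x_i + ℓ_i satisfy the consistency conditions L2ᵀ = −(B1 + D1L1)(A1 + B1ᵀL1)⁻¹, ℓ2ᵀ = −(a1ᵀ + b1ᵀL1)(A1 + B1ᵀL1)⁻¹, L1ᵀ = −(B2 + D2L2)(A2 + B2ᵀL2)⁻¹, ℓ1ᵀ = −(a2ᵀ + b2ᵀL2)(A2 + B2ᵀL2)⁻¹ (with the inverses existing), and additionally A_i + L_iᵀB_i + B_iᵀL_i + L_iᵀD_iL_i ≻ 0 for i = 1, 2. If (x1ᶜ, x2ᶜ) satisfies x2ᶜ = L1 x1ᶜ + ℓ1 and x1ᶜ = L2 x2ᶜ + ℓ2, then for each i, x_iᶜ is the unique global minimizer of x_i ↦ f_i(x_i, L_i x_i + ℓ_i), i.e., (x1ᶜ, x2ᶜ) together with the conjectures is a consistent conjectural variations equilibrium. -/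

import Mathlib

open Matrix

/-- Player cost `f(x, y) = ½ xᵀ A x + yᵀ B x + ½ yᵀ D y + aᵀ x + bᵀ y`, i.e.
`(1/2)[x; y]ᵀ [[A, Bᵀ],[B, D]] [x; y] + [a; b]ᵀ [x; y]`, where `x` is the player's own
action and `y` the opponent's. -/
noncomputable def quadCost {di dmi : ℕ}
    (A : Matrix (Fin di) (Fin di) ℝ) (B : Matrix (Fin dmi) (Fin di) ℝ)
    (D : Matrix (Fin dmi) (Fin dmi) ℝ) (a : Fin di → ℝ) (b : Fin dmi → ℝ)
    (x : Fin di → ℝ) (y : Fin dmi → ℝ) : ℝ :=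
  (1 / 2) * (x ⬝ᵥ A.mulVec x) + y ⬝ᵥ B.mulVec x + (1 / 2) * (y ⬝ᵥ D.mulVec y)
    + a ⬝ᵥ x + b ⬝ᵥ y

/-- under the consistency conditions on the affine conjectures
`(L1, ℓ1), (L2, ℓ2)` and the second-order conditions
`A_i + L_iᵀ B_i + B_iᵀ L_i + L_iᵀ D_i L_i ≻ 0`, any point `(x1c, x2c)` with
`x2c = L1 x1c + ℓ1` and `x1c = L2 x2c + ℓ2` is such that each `x_ic` is the unique global
minimizer of `x_i ↦ f_i(x_i, L_i x_i + ℓ_i)` — i.e. `(x1c, x2c)` together with the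
conjectures is a consistent conjectural variations equilibrium. -/
lemma dot_sym {n m : ℕ} (M : Matrix (Fin n) (Fin m) ℝ) (u : Fin n → ℝ) (v : Fin m → ℝ) :
    u ⬝ᵥ M.mulVec v = v ⬝ᵥ Mᵀ.mulVec u := by
  rw [dotProduct_mulVec, dotProduct_comm, mulVec_transpose]

lemma mv_dot {n m : ℕ} (M : Matrix (Fin n) (Fin m) ℝ) (u : Fin m → ℝ) (v : Fin n → ℝ) :
    (M.mulVec u) ⬝ᵥ v = u ⬝ᵥ Mᵀ.mulVec v := by
  rw [dotProduct_comm, dot_sym]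

lemma quad_expand {di dmi : ℕ}
    (A : Matrix (Fin di) (Fin di) ℝ) (B : Matrix (Fin dmi) (Fin di) ℝ)
    (D : Matrix (Fin dmi) (Fin dmi) ℝ) (a : Fin di → ℝ) (b : Fin dmi → ℝ)
    (L : Matrix (Fin dmi) (Fin di) ℝ) (ℓ : Fin dmi → ℝ)
    (hA : A.IsSymm) (hD : D.IsSymm)
    (xc d : Fin di → ℝ) :
    quadCost A B D a b (xc + d) (L.mulVec (xc + d) + ℓ)
      = quadCost A B D a b xc (L.mulVec xc + ℓ)
        + (1 / 2) * (d ⬝ᵥ (A + Lᵀ * B + Bᵀ * L + Lᵀ * D * L).mulVec d)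
        + d ⬝ᵥ ((A + Lᵀ * B + Bᵀ * L + Lᵀ * D * L).mulVec xc
            + ((Bᵀ + Lᵀ * D).mulVec ℓ + a + Lᵀ.mulVec b)) := by
  have e1 : xc ⬝ᵥ A *ᵥ d = d ⬝ᵥ A *ᵥ xc := by rw [dot_sym, hA.eq]
  have e2 : xc ⬝ᵥ Lᵀ *ᵥ B *ᵥ d = d ⬝ᵥ Bᵀ *ᵥ L *ᵥ xc := by
    simp only [mulVec_mulVec]; rw [dot_sym]
    simp [transpose_mul, transpose_transpose, ← mulVec_mulVec]
  have e3 : ℓ ⬝ᵥ B *ᵥ d = d ⬝ᵥ Bᵀ *ᵥ ℓ := by rw [dot_sym]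
  have e4 : xc ⬝ᵥ Lᵀ *ᵥ D *ᵥ L *ᵥ d = d ⬝ᵥ Lᵀ *ᵥ D *ᵥ L *ᵥ xc := by
    simp only [mulVec_mulVec]; rw [dot_sym]
    simp [transpose_mul, transpose_transpose, hD.eq, Matrix.mul_assoc]
  have e5 : ℓ ⬝ᵥ D *ᵥ L *ᵥ d = d ⬝ᵥ Lᵀ *ᵥ D *ᵥ ℓ := by
    simp only [mulVec_mulVec]; rw [dot_sym]
    simp [transpose_mul, transpose_transpose, hD.eq, ← mulVec_mulVec]
  have e6 : a ⬝ᵥ d = d ⬝ᵥ a := dotProduct_comm _ _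
  have e7 : b ⬝ᵥ L *ᵥ d = d ⬝ᵥ Lᵀ *ᵥ b := by rw [dot_sym]
  have e8 : d ⬝ᵥ Lᵀ *ᵥ B *ᵥ d = d ⬝ᵥ Bᵀ *ᵥ L *ᵥ d := by
    simp only [mulVec_mulVec]; rw [dot_sym]
    simp [transpose_mul, transpose_transpose, ← mulVec_mulVec]
  simp only [quadCost, mulVec_add, add_mulVec, dotProduct_add, add_dotProduct, mv_dot,
    ← mulVec_mulVec, transpose_mul, transpose_transpose]
  ring_nf
  linear_combination (1/2 : ℝ) * e1 + e2 + e3 + (1/2 : ℝ) * e4 + (1/2 : ℝ) * e5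
    + e6 + e7 + (1/2 : ℝ) * e8

lemma quad_strict_min {di dmi : ℕ}
    (A : Matrix (Fin di) (Fin di) ℝ) (B : Matrix (Fin dmi) (Fin di) ℝ)
    (D : Matrix (Fin dmi) (Fin dmi) ℝ) (a : Fin di → ℝ) (b : Fin dmi → ℝ)
    (L : Matrix (Fin dmi) (Fin di) ℝ) (ℓ : Fin dmi → ℝ)
    (hA : A.IsSymm) (hD : D.IsSymm)
    (hpos : (A + Lᵀ * B + Bᵀ * L + Lᵀ * D * L).PosDef)
    (xc : Fin di → ℝ)
    (hstat : (A + Lᵀ * B + Bᵀ * L + Lᵀ * D * L).mulVec xc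
        + ((Bᵀ + Lᵀ * D).mulVec ℓ + a + Lᵀ.mulVec b) = 0)
    (x : Fin di → ℝ) (hx : x ≠ xc) :
    quadCost A B D a b xc (L.mulVec xc + ℓ) < quadCost A B D a b x (L.mulVec x + ℓ) := by
  have hd : x - xc ≠ 0 := sub_ne_zero.mpr hx
  have hx' : x = xc + (x - xc) := by ring
  rw [hx', quad_expand A B D a b L ℓ hA hD xc (x - xc), hstat]
  have := hpos.dotProduct_mulVec_pos hd
  have this' : 0 < (x - xc) ⬝ᵥ (A + Lᵀ * B + Bᵀ * L + Lᵀ * D * L).mulVec (x - xc) := by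
    simpa using this
  simp only [dotProduct_zero, add_zero]
  linarith

theorem stmt_17 {d1 d2 : ℕ}
    (A1 : Matrix (Fin d1) (Fin d1) ℝ) (B1 : Matrix (Fin d2) (Fin d1) ℝ)
    (D1 : Matrix (Fin d2) (Fin d2) ℝ) (a1 : Fin d1 → ℝ) (b1 : Fin d2 → ℝ)
    (A2 : Matrix (Fin d2) (Fin d2) ℝ) (B2 : Matrix (Fin d1) (Fin d2) ℝ)
    (D2 : Matrix (Fin d1) (Fin d1) ℝ) (a2 : Fin d2 → ℝ) (b2 : Fin d1 → ℝ)
    (L1 : Matrix (Fin d2) (Fin d1) ℝ) (ℓ1 : Fin d2 → ℝ)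
    (L2 : Matrix (Fin d1) (Fin d2) ℝ) (ℓ2 : Fin d1 → ℝ)
    (hA1 : A1.IsSymm) (hD1 : D1.IsSymm) (hA2 : A2.IsSymm) (hD2 : D2.IsSymm)
    (hinv1 : IsUnit (A1 + B1ᵀ * L1).det) (hinv2 : IsUnit (A2 + B2ᵀ * L2).det)
    (hL2 : L2ᵀ = -((B1 + D1 * L1) * (A1 + B1ᵀ * L1)⁻¹))
    (hℓ2 : ℓ2 = -Matrix.vecMul (a1 + Matrix.vecMul b1 L1) (A1 + B1ᵀ * L1)⁻¹)
    (hL1 : L1ᵀ = -((B2 + D2 * L2) * (A2 + B2ᵀ * L2)⁻¹))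
    (hℓ1 : ℓ1 = -Matrix.vecMul (a2 + Matrix.vecMul b2 L2) (A2 + B2ᵀ * L2)⁻¹)
    (hpos1 : (A1 + L1ᵀ * B1 + B1ᵀ * L1 + L1ᵀ * D1 * L1).PosDef)
    (hpos2 : (A2 + L2ᵀ * B2 + B2ᵀ * L2 + L2ᵀ * D2 * L2).PosDef)
    (x1c : Fin d1 → ℝ) (x2c : Fin d2 → ℝ)
    (hc1 : x2c = L1.mulVec x1c + ℓ1) (hc2 : x1c = L2.mulVec x2c + ℓ2) :
    (∀ x1 : Fin d1 → ℝ, x1 ≠ x1c →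
      quadCost A1 B1 D1 a1 b1 x1c (L1.mulVec x1c + ℓ1) <
        quadCost A1 B1 D1 a1 b1 x1 (L1.mulVec x1 + ℓ1)) ∧
    (∀ x2 : Fin d2 → ℝ, x2 ≠ x2c →
      quadCost A2 B2 D2 a2 b2 x2c (L2.mulVec x2c + ℓ2) <
        quadCost A2 B2 D2 a2 b2 x2 (L2.mulVec x2 + ℓ2)) := by
  -- generic stationarity argument, applied to each player
  have main : ∀ {di dmi : ℕ}
      (A : Matrix (Fin di) (Fin di) ℝ) (B : Matrix (Fin dmi) (Fin di) ℝ)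
      (D : Matrix (Fin dmi) (Fin dmi) ℝ) (a : Fin di → ℝ) (b : Fin dmi → ℝ)
      (L : Matrix (Fin dmi) (Fin di) ℝ) (ℓ : Fin dmi → ℝ)
      (Lo : Matrix (Fin di) (Fin dmi) ℝ) (ℓo : Fin di → ℝ)
      (hA : A.IsSymm) (hD : D.IsSymm)
      (hinv : IsUnit (A + Bᵀ * L).det)
      (hLo : Loᵀ = -((B + D * L) * (A + Bᵀ * L)⁻¹))
      (hℓo : ℓo = -Matrix.vecMul (a + Matrix.vecMul b L) (A + Bᵀ * L)⁻¹)
      (xc : Fin di → ℝ) (yc : Fin dmi → ℝ)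
      (hy : yc = L.mulVec xc + ℓ) (hxc : xc = Lo.mulVec yc + ℓo),
      (A + Lᵀ * B + Bᵀ * L + Lᵀ * D * L).mulVec xc
        + ((Bᵀ + Lᵀ * D).mulVec ℓ + a + Lᵀ.mulVec b) = 0 := by
    intro di dmi A B D a b L ℓ Lo ℓo hA hD hinv hLo hℓo xc yc hy hxc
    set K := A + Bᵀ * L with hKdef
    set N := A + Lᵀ * B with hNdef
    have hK : Kᵀ = N := by
      simp [hKdef, hNdef, transpose_add, transpose_mul, transpose_transpose, hA.eq]
    have hNdet : IsUnit N.det := by rw [← hK, Matrix.det_transpose]; exact hinv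
    have hNinv : N * N⁻¹ = 1 := Matrix.mul_nonsing_inv N hNdet
    have hKit : (K⁻¹)ᵀ = N⁻¹ := by rw [Matrix.transpose_nonsing_inv, hK]
    have hLo' : Lo = -(N⁻¹ * (Bᵀ + Lᵀ * D)) := by
      have := congrArg Matrix.transpose hLo
      simpa [transpose_mul, transpose_transpose, transpose_neg, hD.eq, hKit] using this
    have hℓo' : ℓo = -(N⁻¹.mulVec (a + Lᵀ.mulVec b)) := by
      rw [hℓo]
      rw [← Matrix.mulVec_transpose, hKit]
      congr 1
      rw [← Matrix.mulVec_transpose]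
    have hNx : N.mulVec xc = -((Bᵀ + Lᵀ * D).mulVec yc) - (a + Lᵀ.mulVec b) := by
      rw [hxc, hLo', hℓo', mulVec_add, mulVec_mulVec]
      have h1 : N * -(N⁻¹ * (Bᵀ + Lᵀ * D)) = -(Bᵀ + Lᵀ * D) := by
        rw [Matrix.mul_neg, ← Matrix.mul_assoc, hNinv, Matrix.one_mul]
      rw [h1, Matrix.mulVec_neg, Matrix.mulVec_mulVec, hNinv, Matrix.one_mulVec,
        Matrix.neg_mulVec]
      abel
    have hMsplit : A + Lᵀ * B + Bᵀ * L + Lᵀ * D * L = N + (Bᵀ + Lᵀ * D) * L := by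
      rw [hNdef, Matrix.add_mul]; abel
    rw [hMsplit, add_mulVec, ← mulVec_mulVec, hNx, hy, mulVec_add]
    abel
  constructor
  · intro x1 hx1
    exact quad_strict_min A1 B1 D1 a1 b1 L1 ℓ1 hA1 hD1 hpos1 x1c
      (main A1 B1 D1 a1 b1 L1 ℓ1 L2 ℓ2 hA1 hD1 hinv1 hL2 hℓ2 x1c x2c hc1 hc2) x1 hx1
  · intro x2 hx2
    exact quad_strict_min A2 B2 D2 a2 b2 L2 ℓ2 hA2 hD2 hpos2 x2c
      (main A2 B2 D2 a2 b2 L2 ℓ2 L1 ℓ1 hA2 hD2 hinv2 hL1 hℓ1 x2c x1c hc2 hc1) x2 hx2
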